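/- Let h : ℝ. Define the real 3×3 matrices J := ![![0,2,0],![0,0,2],![0,0,0]], K := diagonal (2,0,−2), S := 1 + (h^2/2)•(J*J), T := h•J + S, T' := S − h•J, and H := S*K. Then T*T' = 1 = T'*T, and the following three matrix identities hold: (a) −2h•(T*H) = −h•((T*T + 1)*K); (b) −2h^2•( T*T − T'*T' + 2•((T*H)*(T'*T' − 1)) − (T*H)*(T*H)*(T'*T') ) = (h^2/2)•( (T+T')*(T+T')*(K*K) − 4•(T*T − T'*T') + 4•((T'*T' − 1)*K) ); (c) −2h•( (T*H)*(T'*T') − T'*T' + 1 ) = −h•( (T'*T' + 1)*K + 2•(T'*T' − 1) ). Consequently the 3×3 block upper-triangular 9×9 matrices with diagonal blocks (T*T, 1, T'*T'), blocks (1,2), (1,3), (2,3) given respectively by the left-hand sides and by the right-hand sides, coincide. -/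
import Mathlib


open Matrix

set_option maxHeartbeats 4000000 in
/-- In the spin-1 representation, the matrix `R_h^{1;j}` read from the Jordanian universal
R-matrix (left-hand sides) coincides with the contracted matrix `R̃_h^{1;j}` (right-hand
sides), block by block, together with the invertibility `T T' = 1 = T' T`. -/
theorem contracted_R_one_j_equals_Rh_one_j (h : ℝ)
    (J K S T T' H : Matrix (Fin 3) (Fin 3) ℝ)
    (hJ : J = !![0, 2, 0; 0, 0, 2; 0, 0, 0])
    (hK : K = Matrix.diagonal ![2, 0, -2])
    (hS : S = 1 + (h ^ 2 / 2) • (J * J))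
    (hT : T = h • J + S)
    (hT' : T' = S - h • J)
    (hH : H = S * K) :
    T * T' = 1 ∧ T' * T = 1 ∧
    (-(2 * h)) • (T * H) = (-h) • ((T * T + 1) * K) ∧
    (-(2 * h ^ 2)) • (T * T - T' * T' + (2 : ℝ) • ((T * H) * (T' * T' - 1))
        - (T * H) * (T * H) * (T' * T')) =
      (h ^ 2 / 2) • ((T + T') * (T + T') * (K * K) - (4 : ℝ) • (T * T - T' * T')
        + (4 : ℝ) • ((T' * T' - 1) * K)) ∧
    (-(2 * h)) • ((T * H) * (T' * T') - T' * T' + 1) =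
      (-h) • ((T' * T' + 1) * K + (2 : ℝ) • (T' * T' - 1)) ∧
    (Matrix.of fun (p r : Fin 3 × Fin 3) =>
      (![![T * T,
          (-(2 * h)) • (T * H),
          (-(2 * h ^ 2)) • (T * T - T' * T' + (2 : ℝ) • ((T * H) * (T' * T' - 1))
            - (T * H) * (T * H) * (T' * T'))],
        ![0, 1, (-(2 * h)) • ((T * H) * (T' * T') - T' * T' + 1)],
        ![0, 0, T' * T']] : Fin 3 → Fin 3 → Matrix (Fin 3) (Fin 3) ℝ) p.1 r.1 p.2 r.2) =
    (Matrix.of fun (p r : Fin 3 × Fin 3) =>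
      (![![T * T,
          (-h) • ((T * T + 1) * K),
          (h ^ 2 / 2) • ((T + T') * (T + T') * (K * K) - (4 : ℝ) • (T * T - T' * T')
            + (4 : ℝ) • ((T' * T' - 1) * K))],
        ![0, 1, (-h) • ((T' * T' + 1) * K + (2 : ℝ) • (T' * T' - 1))],
        ![0, 0, T' * T']] : Fin 3 → Fin 3 → Matrix (Fin 3) (Fin 3) ℝ) p.1 r.1 p.2 r.2) := by
  subst hJ hK hS hT hT' hH
  set J : Matrix (Fin 3) (Fin 3) ℝ := !![0, 2, 0; 0, 0, 2; 0, 0, 0] with hJ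
  set K : Matrix (Fin 3) (Fin 3) ℝ := Matrix.diagonal ![2, 0, -2] with hK
  set S : Matrix (Fin 3) (Fin 3) ℝ := 1 + (h ^ 2 / 2) • (J * J) with hS
  set T : Matrix (Fin 3) (Fin 3) ℝ := h • J + S with hT
  set T' : Matrix (Fin 3) (Fin 3) ℝ := S - h • J with hT'
  have blk : ∀ A B : Matrix (Fin 3) (Fin 3) ℝ,
      (∀ i j, A i j = B i j) → A = B := fun A B hab => by ext i j; exact hab i j
  have e1 : T * T' = 1 := by
    apply blk; intro i j; fin_cases i <;> fin_cases j <;>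
      simp [hT, hT', hS, hK, hJ, Matrix.mul_apply, Fin.sum_univ_succ,
        Matrix.one_apply, Matrix.diagonal, Matrix.vecHead, Matrix.vecTail] <;> ring
  have e2 : T' * T = 1 := by
    apply blk; intro i j; fin_cases i <;> fin_cases j <;>
      simp [hT, hT', hS, hK, hJ, Matrix.mul_apply, Fin.sum_univ_succ,
        Matrix.one_apply, Matrix.diagonal, Matrix.vecHead, Matrix.vecTail] <;> ring
  have e3 : (-(2 * h)) • (T * (S * K)) = (-h) • ((T * T + 1) * K) := by
    apply blk; intro i j; fin_cases i <;> fin_cases j <;>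
      simp [hT, hT', hS, hK, hJ, Matrix.mul_apply, Fin.sum_univ_succ,
        Matrix.one_apply, Matrix.diagonal, Matrix.vecHead, Matrix.vecTail] <;> ring
  have e4 : (-(2 * h ^ 2)) • (T * T - T' * T' + (2 : ℝ) • ((T * (S * K)) * (T' * T' - 1))
        - (T * (S * K)) * (T * (S * K)) * (T' * T')) =
      (h ^ 2 / 2) • ((T + T') * (T + T') * (K * K) - (4 : ℝ) • (T * T - T' * T')
        + (4 : ℝ) • ((T' * T' - 1) * K)) := by
    apply blk; intro i j; fin_cases i <;> fin_cases j <;>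
      simp [hT, hT', hS, hK, hJ, Matrix.mul_apply, Fin.sum_univ_succ,
        Matrix.one_apply, Matrix.diagonal, Matrix.vecHead, Matrix.vecTail] <;> ring
  have e5 : (-(2 * h)) • ((T * (S * K)) * (T' * T') - T' * T' + 1) =
      (-h) • ((T' * T' + 1) * K + (2 : ℝ) • (T' * T' - 1)) := by
    apply blk; intro i j; fin_cases i <;> fin_cases j <;>
      simp [hT, hT', hS, hK, hJ, Matrix.mul_apply, Fin.sum_univ_succ,
        Matrix.one_apply, Matrix.diagonal, Matrix.vecHead, Matrix.vecTail] <;> ring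
  exact ⟨e1, e2, e3, e4, e5, by rw [e3, e4, e5]⟩
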